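/- arXiv:0808.1532 — 2 statements merged into one kernel-verified Lean document; each statement's English description precedes it below -/
import Mathlib

section
/- Bell decomposition of the (3,5) quantum secret sharing code (access part of Proposition 8): let C5 be the cycle graph on vertices {1,…,5} and for α, β ∈ ℂ let |S_g⟩ := α|G_{(0,0,0,0,0)}⟩ + β|G_{(1,1,1,1,1)}⟩ ∈ H_5. With Bell states |B_00⟩=(|00⟩+|11⟩)/√2, |B_01⟩=(|00⟩−|11⟩)/√2, |B_10⟩=(|01⟩+|10⟩)/√2, |B_11⟩=(|01⟩−|10⟩)/√2 and |±⟩=(|0⟩±|1⟩)/√2, one has, up to the canonical reordering of tensor factors into qubits {1,3}, qubit 2, and qubits {4,5}: |S_g⟩ = (1/2)[ |B_00⟩_{13}(α|+⟩+β|−⟩)_2|B_01⟩_{45} + |B_01⟩_{13}(α|+⟩−β|−⟩)_2|B_10⟩_{45} + |B_10⟩_{13}(α|−⟩−β|+⟩)_2|B_00⟩_{45} + |B_11⟩_{13}(α|−⟩+β|+⟩)_2|B_11⟩_{45} ]. Hence a Bell measurement on qubits {1,3} localizes the quantum secret onto qubit 2 up to a known local correction. -/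
noncomputable section

open scoped ComplexConjugate

/-- The Hilbert space of qubits indexed by `V`, as functions from bit strings to `ℂ`. -/
abbrev QState (V : Type) : Type := (V → Fin 2) → ℂ

/-- The diagonal operator with diagonal entries `d`. -/
def diagOp {V : Type} (d : (V → Fin 2) → ℂ) : QState V →ₗ[ℂ] QState V where
  toFun f := fun x => d x * f x
  map_add' f g := by funext x; simp [mul_add]
  map_smul' c f := by funext x; simp [smul_eq_mul]; ring

/-- The Pauli `Z` operator on qubit `i`. -/
def Zop {V : Type} (i : V) : QState V →ₗ[ℂ] QState V :=
  diagOp fun x => (-1 : ℂ) ^ (x i : ℕ)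

/-- The Pauli `X` operator on qubit `i` (bit flip). -/
def Xop {V : Type} [DecidableEq V] (i : V) : QState V →ₗ[ℂ] QState V where
  toFun f := fun x => f (Function.update x i (x i + 1))
  map_add' f g := rfl
  map_smul' c f := rfl

/-- The phase gate `S` on qubit `i`, sending `|x⟩` to `(-i)^(x i) |x⟩`. -/
def Sop {V : Type} (i : V) : QState V →ₗ[ℂ] QState V :=
  diagOp fun x => (-Complex.I) ^ (x i : ℕ)

/-- The Pauli `Y` operator on qubit `i`, `Y = i·X·Z`. -/
def Yop {V : Type} [DecidableEq V] (i : V) : QState V →ₗ[ℂ] QState V :=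
  Complex.I • (Xop i ∘ₗ Zop i)

/-- `qVal G x` is the number of edges of `G` both of whose endpoints carry bit 1 in `x`. -/
def qVal {V : Type} (G : SimpleGraph V) (x : V → Fin 2) : ℕ :=
  Nat.card {e : Sym2 V // e ∈ G.edgeSet ∧ ∀ v ∈ e, x v = 1}

/-- The graph state `|G⟩`, with amplitudes `2^{-n/2} (-1)^{q_G(x)}`. -/
def graphState {V : Type} [Fintype V] (G : SimpleGraph V) : QState V :=
  fun x => (((Real.sqrt 2)⁻¹ ^ Fintype.card V : ℝ) : ℂ) * (-1 : ℂ) ^ qVal G x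

/-- The labeled/encoded graph state `|𝒢_ℓ⟩ = (∏_i Z_i^{ℓ_i}) (∏_{j ∈ Vsq} S_j) |G⟩`,
with square-vertex set `Vsq`. -/
def encSq {V : Type} [Fintype V] (G : SimpleGraph V) (Vsq : Set V) (ℓ : V → Fin 2) : QState V :=
  fun x => (-1 : ℂ) ^ Nat.card {i : V // ℓ i = 1 ∧ x i = 1}
    * (-Complex.I) ^ Nat.card {j : V // j ∈ Vsq ∧ x j = 1}
    * graphState G x

/-- The encoded graph state `|G_ℓ⟩` (no square vertices). -/
def encG {V : Type} [Fintype V] (G : SimpleGraph V) (ℓ : V → Fin 2) : QState V :=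
  encSq G ∅ ℓ

open Classical in
/-- The stabilizer operator of vertex `i`: `X_i ∏_{j ∈ N_i} Z_j` for circular vertices,
`Y_i ∏_{j ∈ N_i} Z_j` for square vertices (`i ∈ Vsq`). -/
def Kop {V : Type} [DecidableEq V] (G : SimpleGraph V) (Vsq : Set V) (i : V) :
    QState V →ₗ[ℂ] QState V :=
  (if i ∈ Vsq then Yop i else Xop i) ∘ₗ
    diagOp fun x => (-1 : ℂ) ^ Nat.card {j : V // G.Adj i j ∧ x j = 1}

/-- Merge a bit string on `P` with a bit string on the complement of `P`. -/
def mergeBits {V : Type} [DecidableEq V] (P : Finset V) (a : {i // i ∈ P} → Fin 2)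
    (c : {i // i ∉ P} → Fin 2) : V → Fin 2 :=
  fun i => if h : i ∈ P then a ⟨i, h⟩ else c ⟨i, h⟩

/-- The reduced density matrix of the pure state `ψ` on the qubits in `P`:
`(a, b) ↦ ∑_c ⟨a⊔c|ψ⟩⟨ψ|b⊔c⟩`. -/
def red {V : Type} [Fintype V] [DecidableEq V] (P : Finset V) (ψ : QState V) :
    ({i // i ∈ P} → Fin 2) → ({i // i ∈ P} → Fin 2) → ℂ :=
  fun a b => ∑ c : {i // i ∉ P} → Fin 2, ψ (mergeBits P a c) * conj (ψ (mergeBits P b c))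

/-- The computational basis vector `|y⟩`. -/
def basisVec {V : Type} [Fintype V] [DecidableEq V] (y : V → Fin 2) : QState V :=
  fun x => if x = y then 1 else 0

/-- The matrix entry `⟨x|A|y⟩` of an operator. -/
def opEntry {V : Type} [Fintype V] [DecidableEq V] (A : QState V →ₗ[ℂ] QState V)
    (x y : V → Fin 2) : ℂ := A (basisVec y) x

/-- `A` acts trivially outside `P`: it equals `M ⊗ Id` for some operator `M` on the
qubits in `P`. -/
def trivialOutside {V : Type} [Fintype V] [DecidableEq V] (P : Finset V)
    (A : QState V →ₗ[ℂ] QState V) : Prop :=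
  ∃ M : ({i // i ∈ P} → Fin 2) → ({i // i ∈ P} → Fin 2) → ℂ,
    ∀ a b c c', opEntry A (mergeBits P a c) (mergeBits P b c') = if c = c' then M a b else 0

/-- The product `∏_{i ∈ T} K_i` of (commuting) operators, taken in sorted order. -/
def prodOps {V : Type} [LinearOrder V] (T : Finset V)
    (K : V → QState V →ₗ[ℂ] QState V) : QState V →ₗ[ℂ] QState V :=
  (T.sort (· ≤ ·)).foldr (fun i acc => K i ∘ₗ acc) LinearMap.id


/-- The cycle graph on `Fin n` (consecutive vertices mod `n` are adjacent). -/
def cycG (n : ℕ) [NeZero n] : SimpleGraph (Fin n) where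
  Adj a b := a ≠ b ∧ (b = a + 1 ∨ a = b + 1)
  symm := by refine ⟨?_⟩; intro a b h; exact ⟨h.1.symm, h.2.symm⟩
  loopless := by refine ⟨?_⟩; intro a h; exact h.1 rfl

/-- Components of the Bell states: `bell s t` is `B_{st}` with
`B_00 = (|00⟩+|11⟩)/√2`, `B_01 = (|00⟩−|11⟩)/√2`, `B_10 = (|01⟩+|10⟩)/√2`,
`B_11 = (|01⟩−|10⟩)/√2`. -/
def bell (s t z₁ z₂ : Fin 2) : ℂ :=
  (((Real.sqrt 2)⁻¹ : ℝ) : ℂ) * (-1 : ℂ) ^ ((t : ℕ) * (z₁ : ℕ)) * (if z₂ = z₁ + s then 1 else 0)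

/-- Components of `|+⟩ = (|0⟩+|1⟩)/√2`. -/
def plusC (_ : Fin 2) : ℂ := (((Real.sqrt 2)⁻¹ : ℝ) : ℂ)

/-- Components of `|−⟩ = (|0⟩−|1⟩)/√2`. -/
def minusC (z : Fin 2) : ℂ := (((Real.sqrt 2)⁻¹ : ℝ) : ℂ) * (-1 : ℂ) ^ (z : ℕ)

instance cycG5_decAdj : DecidableRel (cycG 5).Adj := fun a b => by
  unfold cycG; exact inferInstanceAs (Decidable (_ ∧ _))

lemma aux_qVal_parity : ∀ y : Fin 5 → Fin 2,
    Fintype.card {e : Sym2 (Fin 5) // e ∈ (cycG 5).edgeSet ∧ ∀ v ∈ e, y v = 1} % 2 =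
    ((y 0 * y 1 + y 1 * y 2 + y 2 * y 3 + y 3 * y 4 + y 4 * y 0 : Fin 2) : ℕ) % 2 := by decide

lemma aux_ones_parity : ∀ y : Fin 5 → Fin 2,
    Fintype.card {i : Fin 5 // True ∧ y i = 1} % 2 =
    ((y 0 + y 1 + y 2 + y 3 + y 4 : Fin 2) : ℕ) % 2 := by decide

lemma aux_negpow (n m : ℕ) (h : n % 2 = m % 2) : (-1 : ℂ) ^ n = (-1) ^ m := by
  conv_lhs => rw [← Nat.div_add_mod n 2]
  conv_rhs => rw [← Nat.div_add_mod m 2]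
  rw [pow_add, pow_add, pow_mul, pow_mul, h]
  norm_num

lemma aux_qVal (y : Fin 5 → Fin 2) : (-1 : ℂ) ^ qVal (cycG 5) y =
    (-1) ^ ((y 0 * y 1 + y 1 * y 2 + y 2 * y 3 + y 3 * y 4 + y 4 * y 0 : Fin 2) : ℕ) := by
  rw [qVal, Nat.card_eq_fintype_card]
  exact aux_negpow _ _ (aux_qVal_parity y)

lemma aux_ones (y : Fin 5 → Fin 2) :
    (-1 : ℂ) ^ Nat.card {i : Fin 5 // True ∧ y i = 1} =
    (-1) ^ ((y 0 + y 1 + y 2 + y 3 + y 4 : Fin 2) : ℕ) := by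
  rw [Nat.card_eq_fintype_card]
  exact aux_negpow _ _ (aux_ones_parity y)

lemma aux_zeros (y : Fin 5 → Fin 2) :
    Nat.card {i : Fin 5 // (0 : Fin 2) = 1 ∧ y i = 1} = 0 := by
  haveI : IsEmpty {i : Fin 5 // (0 : Fin 2) = 1 ∧ y i = 1} :=
    ⟨fun i => by exact absurd i.2.1 (by decide)⟩
  exact Nat.card_of_isEmpty

lemma aux_vsq (y : Fin 5 → Fin 2) :
    Nat.card {j : Fin 5 // j ∈ (∅ : Set (Fin 5)) ∧ y j = 1} = 0 := by
  haveI : IsEmpty {j : Fin 5 // j ∈ (∅ : Set (Fin 5)) ∧ y j = 1} := ⟨fun j => j.2.1⟩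
  exact Nat.card_of_isEmpty

set_option maxHeartbeats 2000000 in
/-- Bell decomposition of the (3,5) QQ code: for the 5-cycle code state
`|S_g⟩ = α|G_{00000}⟩ + β|G_{11111}⟩`, stated pointwise on the computational basis
(qubits {1,3} ↦ coordinates (0,2), qubit 2 ↦ 1, qubits {4,5} ↦ (3,4)):
`|S_g⟩ = (1/2)[ B₀₀(α|+⟩+β|−⟩)B₀₁ + B₀₁(α|+⟩−β|−⟩)B₁₀ + B₁₀(α|−⟩−β|+⟩)B₀₀
             + B₁₁(α|−⟩+β|+⟩)B₁₁ ]`,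
so a Bell measurement on qubits {1,3} localizes the secret onto qubit 2 up to a known
local correction. -/
theorem c5_qq_bell_decomposition (α β : ℂ) (x : Fin 5 → Fin 2) :
    (α • encG (cycG 5) (fun _ => (0 : Fin 2)) + β • encG (cycG 5) fun _ => (1 : Fin 2)) x =
      (1 / 2 : ℂ) *
        (bell 0 0 (x 0) (x 2) * (α * plusC (x 1) + β * minusC (x 1)) * bell 0 1 (x 3) (x 4) +
         bell 0 1 (x 0) (x 2) * (α * plusC (x 1) - β * minusC (x 1)) * bell 1 0 (x 3) (x 4) +
         bell 1 0 (x 0) (x 2) * (α * minusC (x 1) - β * plusC (x 1)) * bell 0 0 (x 3) (x 4) +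
         bell 1 1 (x 0) (x 2) * (α * minusC (x 1) + β * plusC (x 1)) * bell 1 1 (x 3) (x 4)) := by
  have hs : ((Real.sqrt 2)⁻¹ : ℝ) ^ 2 = 1 / 2 := by
    rw [← Real.sqrt_inv, Real.sq_sqrt (by norm_num)]
    norm_num
  have hc : ((((Real.sqrt 2)⁻¹ ^ Fintype.card (Fin 5) : ℝ)) : ℂ) =
      ((((Real.sqrt 2)⁻¹ : ℝ)) : ℂ) ^ 3 * (1 / 2) := by
    have hr : ((Real.sqrt 2)⁻¹ : ℝ) ^ Fintype.card (Fin 5) =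
        ((Real.sqrt 2)⁻¹ : ℝ) ^ 3 * (1 / 2) := by
      simp only [Fintype.card_fin]
      rw [show (5 : ℕ) = 3 + 2 from rfl, pow_add, hs]
    rw [hr]; push_cast; ring
  simp only [Pi.add_apply, Pi.smul_apply, smul_eq_mul, encG, encSq, graphState]
  rw [aux_qVal x, aux_ones x, aux_zeros x, aux_vsq x, hc]
  simp only [bell, plusC, minusC]
  have h2 : ∀ z : Fin 2, z = 0 ∨ z = 1 := by decide
  rcases h2 (x 0) with h0 | h0 <;> rcases h2 (x 1) with h1 | h1 <;>
    rcases h2 (x 2) with h2' | h2' <;> rcases h2 (x 3) with h3 | h3 <;>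
    rcases h2 (x 4) with h4 | h4 <;>
  · rw [h0, h1, h2', h3, h4]
    norm_num [Fin.ext_iff, Fin.val_add, Fin.val_mul, show ((2 : Fin 2) : ℕ) = 0 from rfl, show ((3 : Fin 2) : ℕ) = 1 from rfl, show ((4 : Fin 2) : ℕ) = 0 from rfl, show ((5 : Fin 2) : ℕ) = 1 from rfl]
    try ring

end
end

section
/- Embedded (n,n) quantum secret sharing identity on an n-GHZ tree (Proposition 11): let 𝒢 be a simple graph on a finite vertex set W ⊇ {1,…,n} (n ≥ 2) such that the neighbourhood of vertex 1 is exactly {2,…,n} and there are no edges among 2,…,n; let Ext := W ∖ {1,…,n} and let 𝒩 be the induced subgraph of 𝒢 on Ext. Let ℓ^1 be the label with 1 on vertex 1 and 0 elsewhere. Then for all α, β ∈ ℂ, up to the canonical reordering of tensor factors: α|𝒢_{(0,…,0)}⟩ + β|𝒢_{ℓ^1}⟩ = 2^{−(n−1)/2} ∑_{m ∈ {0,1}^{n−1}} |m⟩_{2,…,n} ⊗ |𝒩_{f(m)}⟩_{Ext} ⊗ Z^{m_2⊕⋯⊕m_n}(α|+⟩ + β|−⟩)_1, where f(m) is the label string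 on Ext given by f(m)_w := ⊕_{j∈{2,…,n}, j adjacent to w} m_j, and |±⟩ := (|0⟩±|1⟩)/√2. Hence if players 2,…,n measure their qubits in the Z basis with outcomes m, the qubit of player 1 is left in the state Z^{m_2⊕⋯⊕m_n}(α|+⟩+β|−⟩), independently of the attached vertices. -/
noncomputable section
section Helpers

open Finset

lemma negpow_congr {a b : ℕ} (h : (a : ZMod 2) = b) : (-1:ℂ)^a = (-1:ℂ)^b := by
  have h' : a % 2 = b % 2 := by
    rwa [ZMod.natCast_eq_natCast_iff] at h
  conv_lhs => rw [← Nat.div_add_mod a 2]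
  conv_rhs => rw [← Nat.div_add_mod b 2]
  rw [h', pow_add, pow_add, pow_mul, pow_mul, neg_one_sq, one_pow, one_pow]

lemma natCard_subtype {α : Type*} [Fintype α] (p : α → Prop) [DecidablePred p] :
    Nat.card {x // p x} = (Finset.univ.filter p).card := by
  rw [Nat.card_eq_fintype_card, Fintype.card_subtype]

open Fin.NatCast in
lemma zmod2_cast (n : ℕ) : (n : ZMod 2) = if (n : Fin 2) = 1 then 1 else 0 := by
  have hv : ((n : Fin 2) = 1) ↔ n % 2 = 1 := by
    rw [Fin.ext_iff, Fin.val_natCast]; exact Iff.rfl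
  conv_lhs => rw [← Nat.div_add_mod n 2]
  have h2 : ((2:ℕ) : ZMod 2) = 0 := by decide
  rw [Nat.cast_add, Nat.cast_mul, h2, zero_mul, zero_add]
  rcases Nat.mod_two_eq_zero_or_one n with h | h <;>
    simp [h, hv]

lemma fin2_cases (z : Fin 2) : z = 0 ∨ z = 1 := by omega

lemma cast_card_filter {α : Type*} [Fintype α] (q : α → Prop) [DecidablePred q]
    {R : Type*} [AddCommMonoidWithOne R] :
    (((Finset.univ.filter q).card : ℕ) : R) = ∑ w, if q w then (1 : R) else 0 := by
  rw [Finset.card_filter, Nat.cast_sum]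
  exact Finset.sum_congr rfl fun w _ => by split_ifs <;> simp

open scoped Classical in
lemma natCard_single {α : Type*} (a : α) (p : α → Prop) :
    Nat.card {i // i = a ∧ p i} = if p a then 1 else 0 := by
  split_ifs with h
  · have : Unique {i // i = a ∧ p i} :=
      ⟨⟨⟨a, rfl, h⟩⟩, by rintro ⟨i, rfl, _⟩; rfl⟩
    exact Nat.card_unique
  · have : IsEmpty {i // i = a ∧ p i} := ⟨by rintro ⟨i, rfl, hi⟩; exact h hi⟩
    exact Nat.card_of_isEmpty

end Helpers

open scoped ComplexConjugate

open Fin.NatCast in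
set_option maxHeartbeats 2000000 in
/-- embedded (n,n) quantum secret sharing identity on an n-GHZ tree,
n = m+2 ≥ 2 players: with `G`, `pl` as in the embedded setting (centre `pl 0`
adjacent exactly to the other players, no edges among them, arbitrary attachments),
`Ext` the set of non-player vertices and `𝒩` the induced subgraph on `Ext`, the code
state satisfies, pointwise on the computational basis,
`α|𝒢_{0…0}⟩ + β|𝒢_{ℓ¹}⟩ = 2^{−(n−1)/2} ∑_m |m⟩_{players≠0} ⊗ |𝒩_{f(m)}⟩_{Ext} ⊗
Z^{⊕ m_j}(α|+⟩+β|−⟩)_{pl 0}`, where `f(m)_w = ⊕_{j≠0, pl j ∼ w} m_j`.  Hence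
`Z`-measurements by the other players localize the secret on the centre,
independently of the attached vertices. -/

theorem embedded_nn_qq (m : ℕ) (V : Type) [Fintype V] [DecidableEq V]
    (G : SimpleGraph V) [DecidableRel G.Adj] (pl : Fin (m + 2) → V)
    (hinj : Function.Injective pl)
    (hnb : ∀ w : V, G.Adj (pl 0) w ↔ ∃ j : Fin (m + 2), j ≠ 0 ∧ w = pl j)
    (hnoedge : ∀ j k : Fin (m + 2), j ≠ 0 → k ≠ 0 → ¬G.Adj (pl j) (pl k))
    (α β : ℂ) (x : V → Fin 2) :
    (α • encG G (fun _ => 0) + β • encG G fun w => if w = pl 0 then 1 else 0) x =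
      (((Real.sqrt 2)⁻¹ ^ (m + 1) : ℝ) : ℂ) *
        encG (G.induce {w | ∀ j, w ≠ pl j})
          (fun w => ((Nat.card
              {j : Fin (m + 2) // j ≠ 0 ∧ G.Adj (pl j) w.1 ∧ x (pl j) = 1} : ℕ) : Fin 2))
          (fun w => x w.1) *
        ((-1 : ℂ) ^ ((Nat.card {j : Fin (m + 2) // j ≠ 0 ∧ x (pl j) = 1} % 2) *
            (x (pl 0) : ℕ)) *
          (α * plusC (x (pl 0)) + β * minusC (x (pl 0)))) := by
  classical
  set c : ℂ := (((Real.sqrt 2)⁻¹ : ℝ) : ℂ) with hc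
  set x0 : Fin 2 := x (pl 0) with hx0
  set qG : ℕ := qVal G x with hqG
  set qN : ℕ := qVal (G.induce {w | ∀ j, w ≠ pl j}) (fun w => x w.1) with hqN
  set A : ℕ := Nat.card {i : ↥{w | ∀ j, w ≠ pl j} //
      (fun w : ↥{w | ∀ j, w ≠ pl j} => ((Nat.card
        {j : Fin (m + 2) // j ≠ 0 ∧ G.Adj (pl j) w.1 ∧ x (pl j) = 1} : ℕ) : Fin 2)) i = 1
      ∧ (fun w : ↥{w | ∀ j, w ≠ pl j} => x w.1) i = 1} with hA
  set S : ℕ := Nat.card {j : Fin (m + 2) // j ≠ 0 ∧ x (pl j) = 1} with hS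
  set nE : ℕ := Fintype.card ↥{w | ∀ j, w ≠ pl j} with hnE
  have hcardV : Fintype.card V = nE + (m + 2) := by
    have h1 : (Finset.univ.filter fun w : V => ¬(∀ j, w ≠ pl j)) = Finset.univ.image pl := by
      ext w
      simp only [Finset.mem_filter, Finset.mem_univ, true_and, not_forall, not_not,
        Finset.mem_image]
      constructor
      · rintro ⟨j, h⟩; exact ⟨j, by simpa using h.symm⟩
      · rintro ⟨j, _, rfl⟩; exact ⟨j, by simp⟩
    have h2 := Finset.card_filter_add_card_filter_not
      (s := (Finset.univ : Finset V)) (p := fun w : V => ∀ j, w ≠ pl j)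
    have h3 : nE = (Finset.univ.filter fun w : V => ∀ j, w ≠ pl j).card := by
      rw [hnE, ← Nat.card_eq_fintype_card]
      exact natCard_subtype _
    have h4 : (Finset.univ.image pl).card = m + 2 := by
      rw [Finset.card_image_of_injective _ hinj, Finset.card_univ, Fintype.card_fin]
    rw [← Finset.card_univ, ← h2, h1, h4, h3]
  have hparity : ((qG : ZMod 2)) = ((qN + A + (S % 2) * (x0 : ℕ) : ℕ) : ZMod 2) := by
    set P : Sym2 V → Prop := fun e => e ∈ G.edgeSet ∧ ∀ v ∈ e, x v = 1 with hP
    have hqG' : qG = (Finset.univ.filter P).card := by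
      rw [hqG]; exact natCard_subtype _
    have split1 := Finset.card_filter_add_card_filter_not
      (s := Finset.univ.filter P) (p := fun e : Sym2 V => pl 0 ∈ e)
    rw [Finset.filter_filter, Finset.filter_filter] at split1
    have split2 := Finset.card_filter_add_card_filter_not
      (s := Finset.univ.filter fun e : Sym2 V => P e ∧ pl 0 ∉ e)
      (p := fun e : Sym2 V => ∀ j, pl j ∉ e)
    rw [Finset.filter_filter, Finset.filter_filter] at split2
    have hC1 : (Finset.univ.filter fun e : Sym2 V => P e ∧ pl 0 ∈ e).card = S * (x0 : ℕ) := by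
      have hSf : S = (Finset.univ.filter fun j : Fin (m + 2) => j ≠ 0 ∧ x (pl j) = 1).card := by
        rw [hS]; exact natCard_subtype _
      rcases fin2_cases x0 with h | h
      · rw [h]
        simp only [Fin.val_zero, Nat.mul_zero]
        rw [Finset.card_eq_zero, Finset.filter_eq_empty_iff]
        rintro e -
        rintro ⟨⟨he, hlit⟩, hmem⟩
        have := hlit (pl 0) hmem
        rw [← hx0, h] at this
        exact absurd this (by decide)
      · rw [h]
        simp only [Fin.val_one, Nat.mul_one, hSf]
        have hx1 : x (pl 0) = 1 := by rw [← hx0, h]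
        symm
        apply Finset.card_bij (fun j _ => s(pl 0, pl j))
        · intro j hj
          simp only [Finset.mem_filter, Finset.mem_univ, true_and] at hj ⊢
          refine ⟨⟨?_, ?_⟩, Sym2.mem_mk_left _ _⟩
          · rw [SimpleGraph.mem_edgeSet, hnb]
            exact ⟨j, hj.1, rfl⟩
          · intro v hv
            rcases Sym2.mem_iff.mp hv with rfl | rfl
            · exact hx1
            · exact hj.2
        · intro j1 h1 j2 h2 heq
          simp only [Finset.mem_filter, Finset.mem_univ, true_and] at h1 h2
          rcases Sym2.eq_iff.mp heq with ⟨-, h⟩ | ⟨h, -⟩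
          · exact hinj h
          · exact absurd (hinj h.symm) h2.1
        · rintro e he
          revert he
          induction e using Sym2.ind with
          | _ u v =>
            intro he
            simp only [Finset.mem_filter, Finset.mem_univ, true_and] at he
            obtain ⟨⟨hadj, hlit⟩, hmem⟩ := he
            rw [SimpleGraph.mem_edgeSet] at hadj
            rcases Sym2.mem_iff.mp hmem with h0 | h0
            · obtain ⟨j, hj0, rfl⟩ := (hnb v).mp (h0 ▸ hadj)
              refine ⟨j, Finset.mem_filter.mpr ⟨Finset.mem_univ _, hj0,
                hlit _ (Sym2.mem_mk_right _ _)⟩, ?_⟩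
              rw [← h0]
            · obtain ⟨j, hj0, rfl⟩ := (hnb u).mp (h0 ▸ hadj).symm
              refine ⟨j, Finset.mem_filter.mpr ⟨Finset.mem_univ _, hj0,
                hlit _ (Sym2.mem_mk_left _ _)⟩, ?_⟩
              rw [← h0, Sym2.eq_swap]
    have hC3 : (Finset.univ.filter fun e : Sym2 V =>
        (P e ∧ pl 0 ∉ e) ∧ ∀ j, pl j ∉ e).card = qN := by
      have hqN' : qN = (Finset.univ.filter fun e : Sym2 ↥{w | ∀ j, w ≠ pl j} =>
          e ∈ (G.induce {w | ∀ j, w ≠ pl j}).edgeSet ∧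
            ∀ v ∈ e, (fun w : ↥{w | ∀ j, w ≠ pl j} => x w.1) v = 1).card := by
        rw [hqN]; exact natCard_subtype _
      rw [hqN']
      symm
      apply Finset.card_bij (fun e _ => Sym2.map Subtype.val e)
      · rintro e he
        revert he
        induction e using Sym2.ind with
        | _ a b =>
          intro he
          simp only [Finset.mem_filter, Finset.mem_univ, true_and] at he ⊢
          obtain ⟨hadj, hlit⟩ := he
          rw [SimpleGraph.mem_edgeSet] at hadj
          rw [Sym2.map_pair_eq]
          have hnp : ∀ j, pl j ∉ s(a.1, b.1) := by
            intro j hj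
            rcases Sym2.mem_iff.mp hj with h | h
            · exact a.2 j h.symm
            · exact b.2 j h.symm
          refine ⟨⟨⟨?_, ?_⟩, hnp 0⟩, hnp⟩
          · exact (SimpleGraph.mem_edgeSet _).mpr hadj
          · intro v hv
            rcases Sym2.mem_iff.mp hv with rfl | rfl
            · exact hlit a (Sym2.mem_mk_left _ _)
            · exact hlit b (Sym2.mem_mk_right _ _)
      · intro e1 h1 e2 h2 heq
        exact Sym2.map.injective Subtype.val_injective heq
      · rintro e he
        revert he
        induction e using Sym2.ind with
        | _ u v =>
          intro he
          simp only [Finset.mem_filter, Finset.mem_univ, true_and] at he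
          obtain ⟨⟨⟨hadj, hlit⟩, -⟩, hnp⟩ := he
          have hu : u ∈ {w : V | ∀ j, w ≠ pl j} := by
            intro j h; exact hnp j (h ▸ Sym2.mem_mk_left _ _)
          have hv : v ∈ {w : V | ∀ j, w ≠ pl j} := by
            intro j h; exact hnp j (h ▸ Sym2.mem_mk_right _ _)
          refine ⟨s(⟨u, hu⟩, ⟨v, hv⟩), Finset.mem_filter.mpr ⟨Finset.mem_univ _, ?_, ?_⟩, ?_⟩
          · exact (SimpleGraph.mem_edgeSet _).mpr ((SimpleGraph.mem_edgeSet _).mp hadj)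
          · intro w hw
            rcases Sym2.mem_iff.mp hw with rfl | rfl
            · exact hlit u (Sym2.mem_mk_left _ _)
            · exact hlit v (Sym2.mem_mk_right _ _)
          · rw [Sym2.map_pair_eq]
    have hC2 : ((Finset.univ.filter fun e : Sym2 V =>
        (P e ∧ pl 0 ∉ e) ∧ ¬∀ j, pl j ∉ e).card : ZMod 2) = (A : ZMod 2) := by
      set nf : V → ℕ := fun w =>
        (Finset.univ.filter fun j : Fin (m + 2) => j ≠ 0 ∧ G.Adj (pl j) w ∧ x (pl j) = 1).card
        with hnf
      have hAf : A = (Finset.univ.filter fun w : V =>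
          (∀ j, w ≠ pl j) ∧ ((nf w : Fin 2) = 1 ∧ x w = 1)).card := by
        have h1 : A = Nat.card {w : V // (∀ j, w ≠ pl j) ∧
            ((Nat.card {j : Fin (m + 2) // j ≠ 0 ∧ G.Adj (pl j) w ∧ x (pl j) = 1} : ℕ)
              : Fin 2) = 1 ∧ x w = 1} := by
          rw [hA]
          exact Nat.card_congr ⟨fun w => ⟨w.1.1, w.1.2, w.2⟩,
            fun w => ⟨⟨w.1, w.2.1⟩, w.2.2⟩, fun _ => rfl, fun _ => rfl⟩
        rw [h1, natCard_subtype]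
        congr 1
        apply Finset.filter_congr
        intro w _
        have h2 : Nat.card {j : Fin (m + 2) // j ≠ 0 ∧ G.Adj (pl j) w ∧ x (pl j) = 1} = nf w :=
          natCard_subtype _
        rw [h2]
      have hbij : (Finset.univ.filter fun e : Sym2 V =>
          (P e ∧ pl 0 ∉ e) ∧ ¬∀ j, pl j ∉ e).card
        = ((Finset.univ : Finset (Fin (m + 2) × V)).filter fun p =>
            (p.1 ≠ 0 ∧ G.Adj (pl p.1) p.2 ∧ x (pl p.1) = 1) ∧
              x p.2 = 1 ∧ ∀ j, p.2 ≠ pl j).card := by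
        symm
        apply Finset.card_bij (fun p _ => s(pl p.1, p.2))
        · rintro ⟨j, w⟩ hp
          simp only [Finset.mem_filter, Finset.mem_univ, true_and] at hp ⊢
          obtain ⟨⟨hj0, hadj, hxj⟩, hxw, hwp⟩ := hp
          refine ⟨⟨⟨(SimpleGraph.mem_edgeSet _).mpr hadj, ?_⟩, ?_⟩, ?_⟩
          · intro v hv
            rcases Sym2.mem_iff.mp hv with rfl | rfl
            exacts [hxj, hxw]
          · intro h0
            rcases Sym2.mem_iff.mp h0 with h | h
            · exact hj0 (hinj h).symm
            · exact hwp 0 h.symm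
          · push_neg
            exact ⟨j, Sym2.mem_mk_left _ _⟩
        · rintro ⟨j1, w1⟩ h1 ⟨j2, w2⟩ h2 heq
          simp only [Finset.mem_filter, Finset.mem_univ, true_and] at h1 h2
          rcases Sym2.eq_iff.mp heq with ⟨ha, hb⟩ | ⟨ha, hb⟩
          · obtain rfl := hinj ha
            obtain rfl := hb
            rfl
          · exact absurd ha.symm (h2.2.2 j1)
        · rintro e he
          revert he
          induction e using Sym2.ind with
          | _ u v =>
            intro he
            simp only [Finset.mem_filter, Finset.mem_univ, true_and] at he
            obtain ⟨⟨⟨hadj, hlit⟩, h0⟩, hex⟩ := he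
            push_neg at hex
            obtain ⟨j, hj⟩ := hex
            rw [SimpleGraph.mem_edgeSet] at hadj
            have hj0 : j ≠ 0 := by
              rintro rfl
              exact h0 hj
            rcases Sym2.mem_iff.mp hj with h | h
            · have hvp : ∀ k, v ≠ pl k := by
                intro k hk
                rcases eq_or_ne k 0 with rfl | hk0
                · exact h0 (by rw [← hk]; exact Sym2.mem_mk_right _ _)
                · exact hnoedge j k hj0 hk0 (by rw [h, ← hk]; exact hadj)
              refine ⟨(j, v), Finset.mem_filter.mpr ⟨Finset.mem_univ _,
                ⟨hj0, by rw [h]; exact hadj, hlit _ hj⟩,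
                hlit v (Sym2.mem_mk_right _ _), hvp⟩, by rw [h]⟩
            · have hvp : ∀ k, u ≠ pl k := by
                intro k hk
                rcases eq_or_ne k 0 with rfl | hk0
                · exact h0 (by rw [← hk]; exact Sym2.mem_mk_left _ _)
                · exact hnoedge k j hk0 hj0 (by rw [h, ← hk]; exact hadj)
              refine ⟨(j, u), Finset.mem_filter.mpr ⟨Finset.mem_univ _,
                ⟨hj0, by rw [h]; exact hadj.symm, hlit _ hj⟩,
                hlit u (Sym2.mem_mk_left _ _), hvp⟩, by rw [h, Sym2.eq_swap]⟩
      rw [hbij, cast_card_filter, Fintype.sum_prod_type_right]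
      have step : ∀ w : V, (∑ j : Fin (m + 2),
          if (j ≠ 0 ∧ G.Adj (pl j) w ∧ x (pl j) = 1) ∧ x w = 1 ∧ ∀ k, w ≠ pl k
            then (1 : ZMod 2) else 0)
          = if (∀ k, w ≠ pl k) ∧ ((nf w : Fin 2) = 1 ∧ x w = 1) then 1 else 0 := by
        intro w
        by_cases hw : x w = 1 ∧ ∀ k, w ≠ pl k
        · have e1 : (∑ j : Fin (m + 2),
              if (j ≠ 0 ∧ G.Adj (pl j) w ∧ x (pl j) = 1) ∧ x w = 1 ∧ ∀ k, w ≠ pl k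
                then (1 : ZMod 2) else 0)
              = ∑ j : Fin (m + 2),
                if j ≠ 0 ∧ G.Adj (pl j) w ∧ x (pl j) = 1 then (1 : ZMod 2) else 0 :=
            Finset.sum_congr rfl fun j _ => if_congr (by tauto) rfl rfl
          have e2 : ((nf w : ℕ) : ZMod 2) = ∑ j : Fin (m + 2),
              if j ≠ 0 ∧ G.Adj (pl j) w ∧ x (pl j) = 1 then (1 : ZMod 2) else 0 :=
            cast_card_filter _
          rw [e1, ← e2]
          exact (zmod2_cast (nf w)).trans
            (if_congr ⟨fun h => ⟨hw.2, h, hw.1⟩, fun h => h.2.1⟩ rfl rfl)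
        · rw [Finset.sum_eq_zero fun j _ => if_neg (by tauto), if_neg (by tauto)]
      rw [Finset.sum_congr rfl fun w _ => step w, hAf, cast_card_filter]
    have hSx : (((S % 2) * (x0 : ℕ) : ℕ) : ZMod 2) = ((S * (x0 : ℕ) : ℕ) : ZMod 2) := by
      push_cast [ZMod.natCast_mod]; ring
    rw [hqG', ← split1, ← split2, hC1, hC3]
    push_cast [ZMod.natCast_mod] at hC2 ⊢
    linear_combination hC2
  -- LHS pieces
  have hempty1 : (Nat.card {j : V // j ∈ (∅ : Set V) ∧ x j = 1}) = 0 := by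
    have : IsEmpty {j : V // j ∈ (∅ : Set V) ∧ x j = 1} :=
      ⟨by rintro ⟨j, hj, -⟩; exact hj⟩
    exact Nat.card_of_isEmpty
  have hempty1' : (Nat.card {j : ↥{w | ∀ j, w ≠ pl j} //
      j ∈ (∅ : Set ↥{w | ∀ j, w ≠ pl j}) ∧ (fun w : ↥{w | ∀ j, w ≠ pl j} => x w.1) j = 1}) = 0 := by
    have : IsEmpty {j : ↥{w | ∀ j, w ≠ pl j} //
        j ∈ (∅ : Set ↥{w | ∀ j, w ≠ pl j}) ∧ (fun w : ↥{w | ∀ j, w ≠ pl j} => x w.1) j = 1} :=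
      ⟨by rintro ⟨j, hj, -⟩; exact hj⟩
    exact Nat.card_of_isEmpty
  have hzero : (Nat.card {i : V // (fun _ : V => (0 : Fin 2)) i = 1 ∧ x i = 1}) = 0 := by
    have : IsEmpty {i : V // (fun _ : V => (0 : Fin 2)) i = 1 ∧ x i = 1} :=
      ⟨by rintro ⟨i, hi, -⟩; simp at hi⟩
    exact Nat.card_of_isEmpty
  have hone : (-1 : ℂ) ^ (Nat.card {i : V //
      (fun w => if w = pl 0 then (1 : Fin 2) else 0) i = 1 ∧ x i = 1}) = (-1 : ℂ) ^ (x0 : ℕ) := by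
    have hcongr : Nat.card {i : V // (fun w => if w = pl 0 then (1 : Fin 2) else 0) i = 1 ∧ x i = 1}
        = Nat.card {i : V // i = pl 0 ∧ x i = 1} := by
      apply Nat.card_congr
      apply Equiv.subtypeEquivRight
      intro i
      constructor
      · rintro ⟨h1, h2⟩
        by_cases h : i = pl 0
        · exact ⟨h, h2⟩
        · simp [h] at h1
      · rintro ⟨rfl, h2⟩
        exact ⟨by simp, h2⟩
    rw [hcongr, natCard_single]
    rcases fin2_cases x0 with h | h <;> rw [← hx0] <;> simp [h]
  have hcv : (((Real.sqrt 2)⁻¹ ^ Fintype.card V : ℝ) : ℂ) = c ^ Fintype.card V := by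
    rw [Complex.ofReal_pow, ← hc]
  have hce : (((Real.sqrt 2)⁻¹ ^ nE : ℝ) : ℂ) = c ^ nE := by rw [Complex.ofReal_pow, ← hc]
  have hcm : (((Real.sqrt 2)⁻¹ ^ (m + 1) : ℝ) : ℂ) = c ^ (m + 1) := by
    rw [Complex.ofReal_pow, ← hc]
  have hNcard : Fintype.card ↥{w | ∀ j, w ≠ pl j} = nE := rfl
  have hsplit : (-1 : ℂ) ^ qG = (-1 : ℂ) ^ qN * (-1 : ℂ) ^ A * (-1 : ℂ) ^ ((S % 2) * (x0 : ℕ)) := by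
    rw [← pow_add, ← pow_add]
    exact negpow_congr (by push_cast at hparity ⊢; linear_combination hparity)
  -- unfold everything
  simp only [Pi.add_apply, Pi.smul_apply, smul_eq_mul, encG, encSq, graphState,
    hempty1, hempty1', hzero, hone, hNcard, hcv, hce, hcm, plusC, minusC,
    pow_zero, mul_one, one_mul, hsplit]
  rw [hcardV]
  push_cast
  rw [show ((Real.sqrt 2 : ℝ) : ℂ)⁻¹ = c from by rw [hc, Complex.ofReal_inv]]
  rw [← hqG, hsplit]
  simp only [hqN, hA]
  ring


end
end
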